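/- Let A be a commutative Noetherian local ring with residue field k, M a finitely generated A-module, and d a natural number. Then injdim M ≤ d if and only if Ext^n_A(A/p, M) = 0 for all primes p ∈ Spec A and all n > d. -/

import Mathlib

open CategoryTheory

/-- The `n`-th Ext group of `M` and `N` over `R`. -/
noncomputable def extModule (R : Type) [CommRing R] (M N : ModuleCat R) (n : ℕ) :
    ModuleCat R :=
  ((Ext R (ModuleCat R) n).obj (Opposite.op M)).obj N

namespace Stmt10Aux

variable {A : Type} [CommRing A]

lemma isZero_iff_subsingleton (X : ModuleCat A) : Limits.IsZero X ↔ Subsingleton X := by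
  constructor
  · intro h
    rw [Limits.IsZero.iff_id_eq_zero] at h
    refine ⟨fun a b => ?_⟩
    have : ∀ x : X, (𝟙 X : X ⟶ X) x = ((0 : X ⟶ X) : X → X) x := fun x => by rw [h]
    simpa using (this a).trans (this b).symm
  · intro h
    exact ModuleCat.isZero_of_subsingleton X

lemma subExt_iff (N : ModuleCat A) (P : ProjectiveResolution N) (M₀ : ModuleCat A) (n : ℕ) :
    Subsingleton (extModule A N M₀ (n+1)) ↔
    ∀ f : P.complex.X (n+1) ⟶ M₀, P.complex.d (n+2) (n+1) ≫ f = 0 →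
      ∃ g : P.complex.X n ⟶ M₀, P.complex.d (n+1) n ≫ g = f := by
  rw [← isZero_iff_subsingleton]
  have h1 : Limits.IsZero (extModule A N M₀ (n+1)) ↔
      Limits.IsZero ((P.complex.linearYonedaObj A M₀).homology (n+1)) :=
    ⟨fun h => h.of_iso (P.isoExt (n+1) M₀).symm, fun h => h.of_iso (P.isoExt (n+1) M₀)⟩
  rw [h1, ← HomologicalComplex.exactAt_iff_isZero_homology,
    (P.complex.linearYonedaObj A M₀).exactAt_iff' n (n+1) (n+2) (by simp) (by simp),
    ShortComplex.moduleCat_exact_iff]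
  dsimp [ChainComplex.linearYonedaObj, HomologicalComplex.sc', linearYoneda]
  exact Iff.rfl

lemma van_of_injective (N : ModuleCat A) (P : ProjectiveResolution N) (Q : Type) [AddCommGroup Q]
    [Module A Q] [Module.Injective A Q] (n : ℕ) (f : P.complex.X (n+1) ⟶ ModuleCat.of A Q)
    (hf : P.complex.d (n+2) (n+1) ≫ f = 0) :
    ∃ g : P.complex.X n ⟶ ModuleCat.of A Q, P.complex.d (n+1) n ≫ g = f := by
  have hexact := (ShortComplex.moduleCat_exact_iff _).mp (P.exact_succ n)
  set dn : ↑(P.complex.X (n+1)) →ₗ[A] ↑(P.complex.X n) := (P.complex.d (n+1) n).hom with hdn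
  set fl : ↑(P.complex.X (n+1)) →ₗ[A] Q := f.hom with hfl
  have hker : LinearMap.ker dn ≤ LinearMap.ker fl := by
    intro x hx
    obtain ⟨y, hy⟩ := hexact x hx
    have : fl (P.complex.d (n+2) (n+1) y) = 0 := ConcreteCategory.congr_hom hf y
    simpa [hy] using this
  set f' : ↥(LinearMap.range dn) →ₗ[A] Q :=
    (Submodule.liftQ (LinearMap.ker dn) fl hker).comp (dn.quotKerEquivRange.symm : _ →ₗ[A] _)
  obtain ⟨g, hg⟩ := Module.Injective.out (LinearMap.range dn).subtype
    (Submodule.injective_subtype _) f'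
  refine ⟨ModuleCat.ofHom g, ?_⟩
  refine ModuleCat.hom_ext (LinearMap.ext ?_)
  intro x
  have h1 := hg ⟨dn x, LinearMap.mem_range_self dn x⟩
  have h2 : dn.quotKerEquivRange.symm ⟨dn x, LinearMap.mem_range_self dn x⟩
      = (LinearMap.ker dn).mkQ x := dn.quotKerEquivRange_symm_apply_image x _
  show g (dn x) = fl x
  have : ((LinearMap.range dn).subtype) ⟨dn x, LinearMap.mem_range_self dn x⟩ = dn x := rfl
  rw [← this, h1]
  show (Submodule.liftQ (LinearMap.ker dn) fl hker) (dn.quotKerEquivRange.symm ⟨dn x, _⟩) = fl x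
  rw [h2]
  simp

lemma ext_subsingleton_of_injective (Q : Type) [AddCommGroup Q] [Module A Q]
    [Module.Injective A Q] (N : ModuleCat A) (n : ℕ) :
    Subsingleton (extModule A N (ModuleCat.of A Q) (n+1)) :=
  (subExt_iff N (ProjectiveResolution.of N) _ n).mpr
    (van_of_injective N (ProjectiveResolution.of N) Q n)

section Step

lemma step_iff (Mo Q : Type) [AddCommGroup Mo] [Module A Mo] [AddCommGroup Q] [Module A Q]
    [Module.Injective A Q] (iota : Mo →ₗ[A] Q) (hiota : Function.Injective iota)
    (N : ModuleCat A) (n : ℕ) :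
    Subsingleton (extModule A N (ModuleCat.of A Mo) (n+2)) ↔
    Subsingleton (extModule A N (ModuleCat.of A (Q ⧸ LinearMap.range iota)) (n+1)) := by
  classical
  set P := ProjectiveResolution.of N with hP
  rw [subExt_iff N P _ (n+1), subExt_iff N P _ n]
  set C0 := Q ⧸ LinearMap.range iota with hC0
  set pi : Q →ₗ[A] C0 := (LinearMap.range iota).mkQ with hpi
  have hpisurj : Function.Surjective pi := Submodule.mkQ_surjective _
  have hkerpi : ∀ q : Q, pi q = 0 ↔ q ∈ LinearMap.range iota := by
    intro q
    rw [hpi, ← LinearMap.mem_ker, Submodule.ker_mkQ]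
  set e : Mo ≃ₗ[A] ↥(LinearMap.range iota) := LinearEquiv.ofInjective iota hiota with hedef
  have he : ∀ z : ↥(LinearMap.range iota), iota (e.symm z) = (z : Q) := by
    intro z
    calc iota (e.symm z) = ↑(e (e.symm z)) := by
          rw [hedef]; exact (LinearEquiv.ofInjective_apply iota (e.symm z)).symm
      _ = ↑z := by rw [e.apply_symm_apply]
  have hproj : ∀ k, Module.Projective A ↑(P.complex.X k) :=
    fun k => (IsProjective.iff_projective _).mpr (P.projective k)
  have hdd : ∀ i j k (x : ↑(P.complex.X i)),
      (P.complex.d j k) ((P.complex.d i j) x) = (0 : ↑(P.complex.X k)) := by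
    intro i j k x
    exact ConcreteCategory.congr_hom (P.complex.d_comp_d i j k) x
  constructor
  · -- vanishing for Mo at n+2 → vanishing for C0 at n+1
    intro hv f hf
    set fl : ↑(P.complex.X (n+1)) →ₗ[A] C0 := f.hom with hfl
    have hfapp : ∀ x, fl (P.complex.d (n+2) (n+1) x) = 0 :=
      fun x => ConcreteCategory.congr_hom hf x
    obtain ⟨hl, hhl0⟩ := Module.projective_lifting_property (h := hproj (n+1)) pi fl hpisurj
    have hhl : ∀ x, pi (hl x) = fl x := fun x => LinearMap.congr_fun hhl0 x
    set w0 : ↑(P.complex.X (n+2)) →ₗ[A] Q :=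
      hl ∘ₗ ((P.complex.d (n+2) (n+1)).hom : ↑(P.complex.X (n+2)) →ₗ[A] ↑(P.complex.X (n+1)))
      with hw0
    have hmem : ∀ x, w0 x ∈ LinearMap.range iota := by
      intro x
      rw [← hkerpi]
      show pi (hl (P.complex.d (n+2) (n+1) x)) = 0
      rw [hhl, hfapp]
    set w : P.complex.X (n+2) ⟶ ModuleCat.of A Mo :=
      ModuleCat.ofHom (((e.symm : ↥(LinearMap.range iota) →ₗ[A] Mo) ∘ₗ
        LinearMap.codRestrict (LinearMap.range iota) w0 hmem : ↑(P.complex.X (n+2)) →ₗ[A] Mo))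
      with hwdef
    have hwapp : ∀ x, iota (w x) = hl (P.complex.d (n+2) (n+1) x) := by
      intro x
      calc iota (w x) = ↑(LinearMap.codRestrict (LinearMap.range iota) w0 hmem x) := he _
        _ = w0 x := LinearMap.codRestrict_apply _ _ x
        _ = hl (P.complex.d (n+2) (n+1) x) := rfl
    have hwcoc : P.complex.d (n+3) (n+2) ≫ w = 0 := by
      refine ModuleCat.hom_ext (LinearMap.ext ?_)
      intro x
      apply hiota
      show iota (w (P.complex.d (n+3) (n+2) x)) = iota 0
      rw [hwapp, hdd, map_zero, map_zero]
    obtain ⟨g', hg'0⟩ := hv w hwcoc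
    have hg' : ∀ x, g'.hom (P.complex.d (n+2) (n+1) x) = w x :=
      fun x => ConcreteCategory.congr_hom hg'0 x
    set h2 : P.complex.X (n+1) ⟶ ModuleCat.of A Q :=
      ModuleCat.ofHom ((hl - iota ∘ₗ g'.hom : ↑(P.complex.X (n+1)) →ₗ[A] Q))
      with hh2
    have hcoc2 : P.complex.d (n+2) (n+1) ≫ h2 = 0 := by
      refine ModuleCat.hom_ext (LinearMap.ext ?_)
      intro x
      show hl (P.complex.d (n+2) (n+1) x) - iota (g' (P.complex.d (n+2) (n+1) x)) = 0
      rw [hg', hwapp, sub_self]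
    obtain ⟨v, hva⟩ := van_of_injective N P Q n h2 hcoc2
    have hvapp : ∀ x, v.hom (P.complex.d (n+1) n x) = h2 x :=
      fun x => ConcreteCategory.congr_hom hva x
    refine ⟨(ModuleCat.ofHom (pi ∘ₗ v.hom) : P.complex.X n ⟶ ModuleCat.of A C0), ?_⟩
    refine ModuleCat.hom_ext (LinearMap.ext ?_)
    intro x
    show pi (v.hom (P.complex.d (n+1) n x)) = fl x
    rw [hvapp]
    show pi (hl x - iota (g' x)) = fl x
    rw [map_sub, hhl]
    have : pi (iota (g' x)) = 0 :=
      (hkerpi _).mpr (LinearMap.mem_range_self _ _)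
    rw [this, sub_zero]
  · -- vanishing for C0 at n+1 → vanishing for Mo at n+2
    intro hv f hf
    set fl : ↑(P.complex.X (n+2)) →ₗ[A] Mo := f.hom with hfl
    have hfapp : ∀ x, fl (P.complex.d (n+3) (n+2) x) = 0 :=
      fun x => ConcreteCategory.congr_hom hf x
    set f2 : P.complex.X (n+2) ⟶ ModuleCat.of A Q :=
      ModuleCat.ofHom ((iota ∘ₗ fl : ↑(P.complex.X (n+2)) →ₗ[A] Q)) with hf2
    have hcoc2 : P.complex.d (n+3) (n+2) ≫ f2 = 0 := by
      refine ModuleCat.hom_ext (LinearMap.ext ?_)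
      intro x
      show iota (fl (P.complex.d (n+3) (n+2) x)) = 0
      rw [hfapp, map_zero]
    obtain ⟨h, hha⟩ := van_of_injective N P Q (n+1) f2 hcoc2
    set hl : ↑(P.complex.X (n+1)) →ₗ[A] Q := h.hom with hhl0
    have hhapp : ∀ x, hl (P.complex.d (n+2) (n+1) x) = iota (fl x) :=
      fun x => ConcreteCategory.congr_hom hha x
    set u0 : P.complex.X (n+1) ⟶ ModuleCat.of A C0 :=
      ModuleCat.ofHom ((pi ∘ₗ hl : ↑(P.complex.X (n+1)) →ₗ[A] C0)) with hu0
    have hcoc0 : P.complex.d (n+2) (n+1) ≫ u0 = 0 := by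
      refine ModuleCat.hom_ext (LinearMap.ext ?_)
      intro x
      show pi (hl (P.complex.d (n+2) (n+1) x)) = 0
      rw [hhapp]
      exact (hkerpi _).mpr (LinearMap.mem_range_self _ _)
    obtain ⟨u, hua⟩ := hv u0 hcoc0
    set ul : ↑(P.complex.X n) →ₗ[A] C0 := u.hom with hul0
    have huapp : ∀ x, ul (P.complex.d (n+1) n x) = u0 x :=
      fun x => ConcreteCategory.congr_hom hua x
    obtain ⟨v, hvl0⟩ := Module.projective_lifting_property (h := hproj n) pi ul hpisurj
    have hvapp : ∀ x, pi (v x) = ul x := fun x => LinearMap.congr_fun hvl0 x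
    set h3 : ↑(P.complex.X (n+1)) →ₗ[A] Q :=
      hl - v ∘ₗ ((P.complex.d (n+1) n).hom : ↑(P.complex.X (n+1)) →ₗ[A] ↑(P.complex.X n)) with hh3
    have hmem : ∀ x, h3 x ∈ LinearMap.range iota := by
      intro x
      rw [← hkerpi]
      show pi (hl x - v (P.complex.d (n+1) n x)) = 0
      rw [map_sub, hvapp, huapp]
      show pi (hl x) - pi (hl x) = 0
      rw [sub_self]
    set w : P.complex.X (n+1) ⟶ ModuleCat.of A Mo :=
      ModuleCat.ofHom (((e.symm : ↥(LinearMap.range iota) →ₗ[A] Mo) ∘ₗ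
        LinearMap.codRestrict (LinearMap.range iota) h3 hmem : ↑(P.complex.X (n+1)) →ₗ[A] Mo))
      with hwdef
    have hwapp : ∀ x, iota (w x) = h3 x := by
      intro x
      calc iota (w x) = ↑(LinearMap.codRestrict (LinearMap.range iota) h3 hmem x) := he _
        _ = h3 x := LinearMap.codRestrict_apply _ _ x
    refine ⟨w, ?_⟩
    refine ModuleCat.hom_ext (LinearMap.ext ?_)
    intro x
    apply hiota
    show iota (w (P.complex.d (n+2) (n+1) x)) = iota (fl x)
    rw [hwapp]
    show hl (P.complex.d (n+2) (n+1) x)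
      - v (P.complex.d (n+1) n (P.complex.d (n+2) (n+1) x)) = iota (fl x)
    rw [hdd, map_zero, sub_zero, hhapp]

end Step

lemma extension_of_ext_one (I : Ideal A) (C0 : Type) [AddCommGroup C0] [Module A C0]
    (hext : Subsingleton (extModule A (ModuleCat.of A (A ⧸ I)) (ModuleCat.of A C0) 1))
    (f : ↥I →ₗ[A] C0) : ∃ h : A →ₗ[A] C0, ∀ x (hx : x ∈ I), h x = f ⟨x, hx⟩ := by
  classical
  set Np : ModuleCat A := ModuleCat.of A (A ⧸ I) with hNp
  set P := ProjectiveResolution.of Np with hP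
  have hvan := (subExt_iff Np P (ModuleCat.of A C0) 0).mp hext
  set pi0 : ↑(P.complex.X 0) →ₗ[A] (A ⧸ I) := (P.π.f 0).hom with hpi0
  have hpi0surj : Function.Surjective pi0 := by
    have hepi : Epi (P.π.f 0) := inferInstance
    exact (ModuleCat.epi_iff_surjective (P.π.f 0)).mp hepi
  have hexact0 := (ShortComplex.moduleCat_exact_iff _).mp P.exact₀
  have hproj : Module.Projective A ↑(P.complex.X 0) :=
    (IsProjective.iff_projective _).mpr (P.projective 0)
  -- lift pi0 along the quotient map A → A ⧸ I
  obtain ⟨sig, hsig0⟩ := Module.projective_lifting_property (h := hproj) I.mkQ pi0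
    (Submodule.mkQ_surjective I)
  have hsig : ∀ x, I.mkQ (sig x) = pi0 x := fun x => LinearMap.congr_fun hsig0 x
  have hsigmem : ∀ x, pi0 x = 0 → sig x ∈ I := by
    intro x hx
    have : I.mkQ (sig x) = 0 := by rw [hsig, hx]
    rwa [← LinearMap.mem_ker, Submodule.ker_mkQ] at this
  have hd10 : ∀ y : ↑(P.complex.X 1), pi0 (P.complex.d 1 0 y) = 0 :=
    fun y => ConcreteCategory.congr_hom P.complex_d_comp_π_f_zero y
  have hdmem : ∀ y : ↑(P.complex.X 1), sig (P.complex.d 1 0 y) ∈ I :=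
    fun y => hsigmem _ (hd10 y)
  set phi : P.complex.X 1 ⟶ ModuleCat.of A C0 :=
    ModuleCat.ofHom ((f ∘ₗ LinearMap.codRestrict I
      (sig ∘ₗ ((P.complex.d 1 0).hom : ↑(P.complex.X 1) →ₗ[A] ↑(P.complex.X 0))) hdmem :
        ↑(P.complex.X 1) →ₗ[A] C0)) with hphi
  have hphiapp : ∀ y, phi y = f ⟨sig (P.complex.d 1 0 y), hdmem y⟩ := fun y => rfl
  have hphicoc : P.complex.d 2 1 ≫ phi = 0 := by
    refine ModuleCat.hom_ext (LinearMap.ext ?_)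
    intro y
    show phi (P.complex.d 2 1 y) = 0
    rw [hphiapp]
    have hz : (P.complex.d 1 0) ((P.complex.d 2 1) y) = (0 : ↑(P.complex.X 0)) :=
      ConcreteCategory.congr_hom (P.complex.d_comp_d 2 1 0) y
    have hz0 : sig ((P.complex.d 1 0) ((P.complex.d 2 1) y)) = 0 := by rw [hz, map_zero]
    have : (⟨sig (P.complex.d 1 0 (P.complex.d 2 1 y)), hdmem _⟩ : ↥I) = 0 :=
      Subtype.ext hz0
    rw [this, map_zero]
  obtain ⟨g, hg0⟩ := hvan phi hphicoc
  set gl : ↑(P.complex.X 0) →ₗ[A] C0 := g.hom with hgl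
  have hg : ∀ y, gl (P.complex.d 1 0 y) = phi y := fun y => ConcreteCategory.congr_hom hg0 y
  have hkey : ∀ x, pi0 x = 0 → ∀ (hm : sig x ∈ I), gl x = f ⟨sig x, hm⟩ := by
    intro x hx hm
    obtain ⟨y, hy⟩ := hexact0 x hx
    have hy' : (P.complex.d 1 0) y = x := hy
    have h1 : gl ((P.complex.d 1 0) y) = phi y := hg y
    rw [hy'] at h1
    rw [h1, hphiapp]
    exact congrArg f (Subtype.ext (congrArg (⇑sig) hy'))
  -- build the extension
  set tau : (↑(P.complex.X 0) × ↥I) →ₗ[A] A :=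
    sig ∘ₗ LinearMap.fst A _ _ + I.subtype ∘ₗ LinearMap.snd A _ _ with htau
  have htauapp : ∀ z : ↑(P.complex.X 0) × ↥I, tau z = sig z.1 + (z.2 : A) := fun z => rfl
  have htausurj : Function.Surjective tau := by
    intro a
    obtain ⟨x, hx⟩ := hpi0surj (I.mkQ a)
    have : I.mkQ (a - sig x) = 0 := by
      rw [map_sub, hsig, hx, sub_self]
    rw [← LinearMap.mem_ker, Submodule.ker_mkQ] at this
    exact ⟨(x, ⟨a - sig x, this⟩), by rw [htauapp]; ring⟩
  set G : (↑(P.complex.X 0) × ↥I) →ₗ[A] C0 :=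
    gl ∘ₗ LinearMap.fst A _ _ + f ∘ₗ LinearMap.snd A _ _ with hG
  have hGapp : ∀ z : ↑(P.complex.X 0) × ↥I, G z = gl z.1 + f z.2 := fun z => rfl
  have hker : LinearMap.ker tau ≤ LinearMap.ker G := by
    intro z hz
    rw [LinearMap.mem_ker] at hz ⊢
    rw [htauapp] at hz
    have hneg : sig z.1 = -(z.2 : A) := by
      rw [eq_neg_iff_add_eq_zero]; exact hz
    have hmem : sig z.1 ∈ I := by
      rw [hneg]; exact I.neg_mem z.2.2
    have hx0 : pi0 z.1 = 0 := by
      rw [← hsig, ← LinearMap.mem_ker, Submodule.ker_mkQ]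
      exact hmem
    rw [hGapp, hkey z.1 hx0 hmem]
    have hval : sig z.1 = ((-z.2 : ↥I) : A) := by rw [hneg]; rfl
    have hsub : (⟨sig z.1, hmem⟩ : ↥I) = -z.2 := Subtype.ext hval
    rw [hsub, map_neg, neg_add_cancel]
  set h : A →ₗ[A] C0 :=
    (Submodule.liftQ (LinearMap.ker tau) G hker) ∘ₗ
      ((LinearMap.quotKerEquivOfSurjective tau htausurj).symm : A →ₗ[A] _) with hh
  have hhtau : ∀ z, h (tau z) = G z := by
    intro z
    rw [hh]
    have : (LinearMap.quotKerEquivOfSurjective tau htausurj).symm (tau z)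
        = Submodule.Quotient.mk z := by
      apply (LinearMap.quotKerEquivOfSurjective tau htausurj).injective
      rw [LinearEquiv.apply_symm_apply]
      rfl
    rw [LinearMap.comp_apply]
    show (Submodule.liftQ (LinearMap.ker tau) G hker)
      (((LinearMap.quotKerEquivOfSurjective tau htausurj).symm :
        A →ₗ[A] (_ ⧸ LinearMap.ker tau)) (tau z)) = G z
    rw [show (((LinearMap.quotKerEquivOfSurjective tau htausurj).symm :
        A →ₗ[A] (_ ⧸ LinearMap.ker tau)) (tau z)) = Submodule.Quotient.mk z from this]
    rw [Submodule.liftQ_apply]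
  refine ⟨h, ?_⟩
  intro x hx
  have h1 := hhtau (0, ⟨x, hx⟩)
  rw [hGapp] at h1
  have h2 : tau (0, ⟨x, hx⟩) = x := by rw [htauapp]; simp
  rw [h2] at h1
  simpa using h1

lemma baer_of_primes [IsNoetherianRing A] (C0 : Type) [AddCommGroup C0] [Module A C0]
    (hext : ∀ p : Ideal A, p.IsPrime → ∀ f : ↥p →ₗ[A] C0,
      ∃ h : A →ₗ[A] C0, ∀ x (hx : x ∈ p), h x = f ⟨x, hx⟩) :
    Module.Baer A C0 := by
  intro I f
  -- the set of ideals J ⊇ I to which f extends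
  set S : Set (Ideal A) :=
    {J | ∃ (hIJ : I ≤ J) (h : ↥J →ₗ[A] C0), ∀ x (hx : x ∈ I), h ⟨x, hIJ hx⟩ = f ⟨x, hx⟩}
    with hS
  have hne : S.Nonempty := ⟨I, le_refl I, f, fun x hx => rfl⟩
  obtain ⟨J, hJS, hJmax⟩ := (set_has_maximal_iff_noetherian.mpr inferInstance) S hne
  obtain ⟨hIJ, h, hh⟩ := hJS
  by_cases hJtop : J = ⊤
  · refine ⟨h ∘ₗ LinearMap.codRestrict J LinearMap.id (fun a => hJtop ▸ Submodule.mem_top), ?_⟩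
    intro x hx
    show h ⟨x, _⟩ = f ⟨x, hx⟩
    exact hh x hx
  · exfalso
    haveI : Nontrivial (A ⧸ J) :=
      Ideal.Quotient.nontrivial_iff.mpr hJtop
    obtain ⟨p, hpassoc⟩ := associatedPrimes.nonempty A (A ⧸ J)
    obtain ⟨hp, xbar, hxbar⟩ := isAssociatedPrime_iff.mp hpassoc
    obtain ⟨a, rfl⟩ := Submodule.mkQ_surjective J xbar
    have hmemp : ∀ r : A, r ∈ p ↔ r * a ∈ J := by
      intro r
      rw [hxbar, Submodule.mem_colon_singleton, Submodule.mem_bot]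
      show r • J.mkQ a = 0 ↔ _
      rw [← map_smul, smul_eq_mul, ← LinearMap.mem_ker, Submodule.ker_mkQ]
    have ha : a ∉ J := by
      intro haJ
      have : p = ⊤ := by
        apply eq_top_iff.mpr
        intro r _
        rw [hmemp]
        rw [← smul_eq_mul]; exact Submodule.smul_mem J r haJ
      exact hp.ne_top this
    -- the map p →ₗ C0, r ↦ h (r * a)
    set mu : ↥p →ₗ[A] ↥J := LinearMap.codRestrict J
      ((LinearMap.toSpanSingleton A A a) ∘ₗ p.subtype) (fun r => (hmemp r).mp r.2) with hmu
    have hmuapp : ∀ r : ↥p, (mu r : A) = (r : A) * a := by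
      intro r
      show ((r : A) • a) = (r : A) * a
      rw [smul_eq_mul]
    obtain ⟨psi, hpsi⟩ := hext p hp (h ∘ₗ mu)
    -- build extension to J' = J + A•a
    set tau : (↥J × A) →ₗ[A] A :=
      J.subtype ∘ₗ LinearMap.fst A _ _ + (LinearMap.toSpanSingleton A A a) ∘ₗ
        LinearMap.snd A _ _ with htau
    have htauapp : ∀ z : ↥J × A, tau z = (z.1 : A) + z.2 * a := by
      intro z
      show (z.1 : A) + z.2 • a = (z.1 : A) + z.2 * a
      rw [smul_eq_mul]
    set J' : Ideal A := LinearMap.range tau with hJ'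
    have hJJ' : J ≤ J' := by
      intro j hj
      refine ⟨(⟨j, hj⟩, 0), ?_⟩
      rw [htauapp]
      simp
    have haJ' : a ∈ J' := by
      refine ⟨(0, 1), ?_⟩
      rw [htauapp]
      simp
    have hlt : J < J' := lt_of_le_of_ne hJJ' (fun hEq => ha (hEq ▸ haJ'))
    set G : (↥J × A) →ₗ[A] C0 := h ∘ₗ LinearMap.fst A _ _ + psi ∘ₗ LinearMap.snd A _ _ with hG
    have hGapp : ∀ z : ↥J × A, G z = h z.1 + psi z.2 := fun z => rfl
    have hker : LinearMap.ker tau ≤ LinearMap.ker G := by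
      intro z hz
      rw [LinearMap.mem_ker] at hz ⊢
      rw [htauapp] at hz
      have hza : z.2 * a = -(z.1 : A) := by rw [eq_neg_iff_add_eq_zero, add_comm]; exact hz
      have hz2p : z.2 ∈ p := (hmemp z.2).mpr (by rw [hza]; exact J.neg_mem z.1.2)
      have hpsi2 : psi z.2 = h (mu ⟨z.2, hz2p⟩) := hpsi z.2 hz2p
      rw [hGapp, hpsi2]
      rw [← map_add]
      have : z.1 + mu ⟨z.2, hz2p⟩ = 0 := by
        apply Subtype.ext
        show (z.1 : A) + (mu ⟨z.2, hz2p⟩ : A) = 0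
        rw [hmuapp]
        show (z.1 : A) + z.2 * a = 0
        rw [hza]
        simp
      rw [this, map_zero]
    set h' : ↥J' →ₗ[A] C0 :=
      (Submodule.liftQ (LinearMap.ker tau) G hker) ∘ₗ
        ((tau.quotKerEquivRange).symm : ↥(LinearMap.range tau) →ₗ[A] _) with hh'
    have hh'app : ∀ z : ↥J × A, h' ⟨tau z, LinearMap.mem_range_self tau z⟩ = G z := by
      intro z
      rw [hh', LinearMap.comp_apply]
      have : (tau.quotKerEquivRange.symm : ↥(LinearMap.range tau) →ₗ[A] _)
          ⟨tau z, LinearMap.mem_range_self tau z⟩ = (LinearMap.ker tau).mkQ z :=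
        tau.quotKerEquivRange_symm_apply_image z _
      rw [this]
      exact Submodule.liftQ_apply _ G z
    -- J' with h' is a bigger extension, contradiction
    apply hJmax J' _ hlt
    refine ⟨hIJ.trans hJJ', h', ?_⟩
    intro x hx
    have h1 := hh'app (⟨x, hIJ hx⟩, 0)
    have h2 : tau (⟨x, hIJ hx⟩, 0) = x := by rw [htauapp]; simp
    have h3 : (⟨tau (⟨x, hIJ hx⟩, 0), LinearMap.mem_range_self tau _⟩ : ↥J')
        = ⟨x, (hIJ.trans hJJ') hx⟩ := Subtype.ext h2
    rw [h3] at h1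
    rw [h1, hGapp]
    show h ⟨x, hIJ hx⟩ + psi 0 = f ⟨x, hx⟩
    rw [map_zero, add_zero]
    exact hh x hx

lemma main_lemma [IsNoetherianRing A] (d : ℕ) :
    ∀ (Mo : Type) [AddCommGroup Mo] [Module A Mo],
      (∀ p : Ideal A, p.IsPrime → ∀ n : ℕ, d < n →
        Subsingleton (extModule A (ModuleCat.of A (A ⧸ p)) (ModuleCat.of A Mo) n)) →
      ∀ (N : ModuleCat A) (n : ℕ), d < n →
        Subsingleton (extModule A N (ModuleCat.of A Mo) n) := by
  induction d with
  | zero =>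
    intro Mo _ _ hyp N n hn
    have hbaer : Module.Baer A Mo :=
      baer_of_primes Mo (fun p hp f => extension_of_ext_one p Mo (hyp p hp 1 Nat.one_pos) f)
    haveI : Module.Injective A Mo := hbaer.injective
    obtain ⟨m, rfl⟩ : ∃ m, n = m + 1 := ⟨n - 1, by omega⟩
    exact ext_subsingleton_of_injective Mo N m
  | succ d ih =>
    intro Mo _ _ hyp N n hn
    haveI : Limits.HasZeroObject (ModuleCat A) := inferInstance
    haveI henough : EnoughInjectives (ModuleCat A) := ModuleCat.enoughInjectives.{0, 0} A
    set MoC : ModuleCat A := ModuleCat.of A Mo with hMoC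
    set Q : ModuleCat A := Injective.under MoC with hQ
    set iota : Mo →ₗ[A] ↑Q := (Injective.ι MoC : MoC ⟶ Q).hom with hiotadef
    have hinj : Function.Injective iota :=
      (ModuleCat.mono_iff_injective (Injective.ι MoC)).mp inferInstance
    haveI hQinj : Injective (ModuleCat.of A ↑Q) := (inferInstance : Injective Q)
    haveI : Module.Injective A ↑Q := Module.injective_module_of_injective_object A ↑Q
    set C0 := (↑Q ⧸ LinearMap.range iota) with hC0
    have hypC : ∀ p : Ideal A, p.IsPrime → ∀ n : ℕ, d < n →
        Subsingleton (extModule A (ModuleCat.of A (A ⧸ p)) (ModuleCat.of A C0) n) := by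
      intro p hp m hm
      obtain ⟨k, rfl⟩ : ∃ k, m = k + 1 := ⟨m - 1, by omega⟩
      exact (step_iff Mo ↑Q iota hinj (ModuleCat.of A (A ⧸ p)) k).mp
        (hyp p hp (k + 2) (by omega))
    have ihC := ih C0 hypC
    obtain ⟨m, rfl⟩ : ∃ m, n = m + 2 := ⟨n - 2, by omega⟩
    exact (step_iff Mo ↑Q iota hinj N m).mpr (ihC N (m + 1) (by omega))


end Stmt10Aux

/-- Injective dimension: the least `n` such that `Ext^i(-, M)` vanishes for all
`i > n`. -/
noncomputable def injDim (R : Type) [CommRing R] (M : ModuleCat R) : ℕ∞ :=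
  sInf {n : ℕ∞ | ∀ (N : ModuleCat R) (i : ℕ), n < (i : ℕ∞) →
    Subsingleton (extModule R N M i)}

/-- For a finitely generated module `M` over a commutative Noetherian local ring,
`injdim M ≤ d` iff `Ext^n(A/p, M) = 0` for all primes `p` and all `n > d`. -/
theorem stmt10 (A : Type) [CommRing A] [IsNoetherianRing A] [IsLocalRing A]
    (M : Type) [AddCommGroup M] [Module A M] [Module.Finite A M] (d : ℕ) :
    injDim A (ModuleCat.of A M) ≤ (d : ℕ∞) ↔
      ∀ (p : Ideal A), p.IsPrime → ∀ n : ℕ, d < n →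
        Subsingleton (extModule A (ModuleCat.of A (A ⧸ p)) (ModuleCat.of A M) n) := by
  set S : Set ℕ∞ := {n : ℕ∞ | ∀ (N : ModuleCat A) (i : ℕ), n < (i : ℕ∞) →
    Subsingleton (extModule A N (ModuleCat.of A M) i)} with hSdef
  have hinjdim : injDim A (ModuleCat.of A M) = sInf S := rfl
  constructor
  · intro hle p hp n hdn
    have hle' : sInf S ≤ (d : ℕ∞) := by rw [← hinjdim]; exact hle
    have hdS : (d : ℕ∞) ∈ S := by
      by_contra hd
      have hgt : ∀ s ∈ S, (d : ℕ∞) < s := by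
        intro s hs
        by_contra hns
        push_neg at hns
        exact hd (fun N i hi => hs N i (lt_of_le_of_lt hns hi))
      have h1 : (d : ℕ∞) + 1 ≤ sInf S :=
        le_sInf (fun s hs => (ENat.add_one_le_iff (by simp)).mpr (hgt s hs))
      have h2 : sInf S < (d : ℕ∞) + 1 :=
        lt_of_le_of_lt hle' (by exact_mod_cast Nat.lt_succ_self d)
      exact absurd h2 (not_lt.mpr h1)
    exact hdS (ModuleCat.of A (A ⧸ p)) n (by exact_mod_cast hdn)
  · intro H
    have hdS : (d : ℕ∞) ∈ S := by
      intro N i hi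
      exact Stmt10Aux.main_lemma d M (fun p hp n hn => H p hp n hn) N i (by exact_mod_cast hi)
    rw [hinjdim]
    exact sInf_le hdS
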